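/- For α > 2, λ > 0, and h > 0, the expected pathloss from the nearest point of a homogeneous PPP of density λ on ℝ² to the origin, with pathloss (r² + h²)^(-α/2) and nearest-distance pdf f_1(r) = 2πλr·e^(-πλr²), equals πλ·h^(2-α)·e^(πλh²)·E_{α/2}(πλh²), where E_n(z) = ∫_1^∞ e^(-zt)·t^(-n) dt is the generalized exponential integral. -/

import Mathlib

open Real MeasureTheory Set

/-- Generalized exponential integral `E_n(z) = ∫₁^∞ e^{-z t} t^{-n} dt`. -/
noncomputable def expIntE (n z : ℝ) : ℝ :=
  ∫ t in Ioi (1 : ℝ), Real.exp (-(z * t)) * t ^ (-n)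

theorem expected_pathloss_nearest (α lam h : ℝ)
    (hα : 2 < α) (hlam : 0 < lam) (hh : 0 < h) :
    (∫ r in Ioi (0 : ℝ),
        (r ^ 2 + h ^ 2) ^ (-(α / 2)) * (2 * π * lam * r * Real.exp (-(π * lam * r ^ 2))))
      = π * lam * h ^ ((2 : ℝ) - α) * Real.exp (π * lam * h ^ 2) *
          expIntE (α / 2) (π * lam * h ^ 2) := by
  have hpl : 0 < π * lam := mul_pos Real.pi_pos hlam
  have hh2 : (0:ℝ) < h ^ 2 := pow_pos hh 2
  set z : ℝ := π * lam * h ^ 2 with hz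
  set g : ℝ → ℝ := fun r => r ^ 2 / h ^ 2 + 1 with hg
  have himg : g '' Ioi (0:ℝ) = Ioi 1 := by
    ext t
    constructor
    · rintro ⟨r, hr, rfl⟩
      have : 0 < r ^ 2 / h ^ 2 := div_pos (pow_pos hr 2) hh2
      simp only [g, mem_Ioi]
      linarith
    · intro ht
      have ht1 : (1:ℝ) < t := ht
      refine ⟨h * Real.sqrt (t - 1), mul_pos hh (Real.sqrt_pos.mpr (by linarith)), ?_⟩
      have h1 : (0:ℝ) ≤ t - 1 := by linarith
      simp only [g, mul_pow, Real.sq_sqrt h1]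
      field_simp
      ring
  have hderiv : ∀ r ∈ Ioi (0:ℝ), HasDerivWithinAt g (2 * r / h ^ 2) (Ioi 0) r := by
    intro r hr
    have : HasDerivAt g (2 * r / h ^ 2) r := by
      have := ((hasDerivAt_pow 2 r).div_const (h ^ 2)).add_const 1
      simpa [g] using this
    exact this.hasDerivWithinAt
  have hinj : InjOn g (Ioi 0) := by
    intro x hx y hy hxy
    have hx' : (0:ℝ) < x := hx
    have hy' : (0:ℝ) < y := hy
    simp only [g] at hxy
    have h2 : x ^ 2 = y ^ 2 := by
      have hne : (h:ℝ) ^ 2 ≠ 0 := ne_of_gt hh2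
      field_simp at hxy
      nlinarith [hxy]
    calc x = Real.sqrt (x ^ 2) := (Real.sqrt_sq hx'.le).symm
    _ = Real.sqrt (y ^ 2) := by rw [h2]
    _ = y := Real.sqrt_sq hy'.le
  have key : expIntE (α / 2) z
      = ∫ r in Ioi (0:ℝ),
          |2 * r / h ^ 2| • (Real.exp (-(z * g r)) * (g r) ^ (-(α / 2))) := by
    rw [expIntE, ← himg,
      integral_image_eq_integral_abs_deriv_smul measurableSet_Ioi hderiv hinj]
  rw [key, ← MeasureTheory.integral_const_mul]
  refine setIntegral_congr_fun measurableSet_Ioi (fun r hr => ?_)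
  have hr : (0:ℝ) < r := hr
  have habs : |2 * r / h ^ 2| = 2 * r / h ^ 2 := abs_of_pos (by positivity)
  have hgr : g r = (r ^ 2 + h ^ 2) / h ^ 2 := by
    simp only [g]; field_simp
  have hrpow : ((r ^ 2 + h ^ 2) / h ^ 2) ^ (-(α / 2))
      = (r ^ 2 + h ^ 2) ^ (-(α / 2)) / (h ^ 2) ^ (-(α / 2)) :=
    Real.div_rpow (by positivity) hh2.le _
  have hhpow : ((h:ℝ) ^ 2) ^ (-(α / 2)) = h ^ (-α) := by
    rw [← Real.rpow_natCast h 2, ← Real.rpow_mul hh.le]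
    norm_num
    congr 1
    ring
  have hexp : z * ((r ^ 2 + h ^ 2) / h ^ 2) = π * lam * r ^ 2 + z := by
    rw [hz]; field_simp
  have hsub : (h:ℝ) ^ ((2:ℝ) - α) = h ^ 2 * h ^ (-α) := by
    rw [Real.rpow_sub hh, Real.rpow_neg hh.le, ← Real.rpow_natCast h 2]
    push_cast
    rw [div_eq_mul_inv]
  rw [smul_eq_mul, habs, hgr, hrpow, hhpow, hexp, neg_add, Real.exp_add, hsub]
  have hA : (0:ℝ) < h ^ (-α) := Real.rpow_pos_of_pos hh _
  have hE : Real.exp z ≠ 0 := Real.exp_ne_zero z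
  rw [Real.exp_neg z]
  field_simp
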